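/- Let V be a real Hilbert space, let N ≥ 1 be a natural number and τ > 0 a real number. Let B : V →L[ℝ] V be a continuous linear operator that is symmetric (⟪B u, v⟫ = ⟪u, B v⟫ for all u, v) and nonnegative (⟪B u, u⟫ ≥ 0 for all u). Let K : V → V be strongly monotone with constant γ > 0 (⟪K u − K v, u − v⟫ ≥ γ‖u − v‖² for all u, v) and Lipschitz continuous with constant L ≥ 0 (‖K u − K v‖ ≤ L‖u − v‖ for all u, v). Then for every f : ZMod N → V there exists a unique u : ZMod N → V such that for every n : ZMod N one has (1/τ) • B (u n − u (n − 1)) + K (u n) = f n. -/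

import Mathlib

open RealInnerProductSpace

section Aux

variable {V : Type*} [NormedAddCommGroup V] [InnerProductSpace ℝ V]

/-- Cauchy–Schwarz-type estimate for the semi-inner product induced by `B`. -/
private lemma bcs_aux (B : V →L[ℝ] V) (hBsymm : ∀ u v : V, ⟪B u, v⟫ = ⟪u, B v⟫)
    (hBnonneg : ∀ u : V, 0 ≤ ⟪B u, u⟫) (a b : V) :
    2 * ⟪B a, b⟫ ≤ ⟪B a, a⟫ + ⟪B b, b⟫ := by
  have h := hBnonneg (a - b)
  have hba : ⟪B b, a⟫ = ⟪B a, b⟫ := by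
    rw [hBsymm, real_inner_comm]
  simp only [map_sub, inner_sub_left, inner_sub_right, hba] at h
  linarith

private lemma sumB_aux {N : ℕ} [NeZero N] (B : V →L[ℝ] V)
    (hBsymm : ∀ u v : V, ⟪B u, v⟫ = ⟪u, B v⟫)
    (hBnonneg : ∀ u : V, 0 ≤ ⟪B u, u⟫) (w : ZMod N → V) :
    0 ≤ ∑ n : ZMod N, ⟪B (w n - w (n - 1)), w n⟫ := by
  have hshift : ∑ n : ZMod N, ⟪B (w (n - 1)), w (n - 1)⟫
      = ∑ n : ZMod N, ⟪B (w n), w n⟫ := by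
    exact Fintype.sum_equiv (Equiv.subRight (1 : ZMod N))
      (fun n => ⟪B (w (n - 1)), w (n - 1)⟫) (fun n => ⟪B (w n), w n⟫) (fun n => rfl)
  have key : ∑ n : ZMod N, ⟪B (w (n - 1)), w n⟫ ≤ ∑ n : ZMod N, ⟪B (w n), w n⟫ := by
    have h1 : ∀ n : ZMod N, ⟪B (w (n - 1)), w n⟫
        ≤ (⟪B (w (n - 1)), w (n - 1)⟫ + ⟪B (w n), w n⟫) / 2 := fun n => by
      linarith [bcs_aux B hBsymm hBnonneg (w (n - 1)) (w n)]
    calc ∑ n : ZMod N, ⟪B (w (n - 1)), w n⟫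
        ≤ ∑ n : ZMod N, (⟪B (w (n - 1)), w (n - 1)⟫ + ⟪B (w n), w n⟫) / 2 :=
          Finset.sum_le_sum fun n _ => h1 n
      _ = (∑ n : ZMod N, ⟪B (w (n - 1)), w (n - 1)⟫
            + ∑ n : ZMod N, ⟪B (w n), w n⟫) / 2 := by
          rw [← Finset.sum_div, Finset.sum_add_distrib]
      _ = ∑ n : ZMod N, ⟪B (w n), w n⟫ := by rw [hshift]; ring
  have expand : ∑ n : ZMod N, ⟪B (w n - w (n - 1)), w n⟫
      = ∑ n : ZMod N, ⟪B (w n), w n⟫ - ∑ n : ZMod N, ⟪B (w (n - 1)), w n⟫ := by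
    rw [← Finset.sum_sub_distrib]
    congr 1
    funext n
    simp [map_sub, inner_sub_left]
  linarith [expand, key]

/-- Compare ℓ²-norms from componentwise square sums. -/
private lemma sq_le_aux {a b : ℝ} (ha : 0 ≤ a) (hb : 0 ≤ b) (h : a ^ 2 ≤ b ^ 2) :
    a ≤ b := by nlinarith

end Aux

set_option maxHeartbeats 1000000 in
/-- Theorem 2 of the paper: unique solvability of the implicit-Euler
time-discretization of the nonlinear time-periodic evolution problem. -/
theorem stmt_0 {V : Type*} [NormedAddCommGroup V] [InnerProductSpace ℝ V]
    [CompleteSpace V]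
    (N : ℕ) [NeZero N] (τ : ℝ) (hτ : 0 < τ)
    (B : V →L[ℝ] V)
    (hBsymm : ∀ u v : V, ⟪B u, v⟫ = ⟪u, B v⟫)
    (hBnonneg : ∀ u : V, 0 ≤ ⟪B u, u⟫)
    (K : V → V) (γ : ℝ) (hγ : 0 < γ)
    (hKmono : ∀ u v : V, γ * ‖u - v‖ ^ 2 ≤ ⟪K u - K v, u - v⟫)
    (L : ℝ) (hL : 0 ≤ L)
    (hKlip : ∀ u v : V, ‖K u - K v‖ ≤ L * ‖u - v‖)
    (f : ZMod N → V) :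
    ∃! u : ZMod N → V, ∀ n : ZMod N,
      (1 / τ) • B (u n - u (n - 1)) + K (u n) = f n := by
  classical
  -- Work in the product Hilbert space E = ℓ²(ZMod N; V).
  let E := PiLp 2 (fun _ : ZMod N => V)
  haveI : CompleteSpace E := inferInstance
  let A : E → E := fun u => WithLp.toLp 2 fun n => (1 / τ) • B (u n - u (n - 1)) + K (u n)
  let fE : E := WithLp.toLp 2 f
  set M : ℝ := 2 * ‖B‖ / τ + L + γ with hMdef
  have hBV : 0 ≤ ‖B‖ := norm_nonneg _
  have hM0 : 0 < M := by positivity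
  have hγM : γ ≤ M := by
    have h00 : 0 ≤ 2 * ‖B‖ / τ := by positivity
    rw [hMdef]
    linarith
  have hsubapp : ∀ (x y : E) (n : ZMod N), (x - y) n = x n - y n := fun _ _ _ => rfl
  have hnormsq : ∀ x : E, ‖x‖ ^ 2 = ∑ n : ZMod N, ‖x n‖ ^ 2 := fun x =>
    PiLp.norm_sq_eq_of_L2 _ x
  -- Strong monotonicity of A on E.
  have hmono : ∀ u v : E, γ * ‖u - v‖ ^ 2 ≤ ⟪A u - A v, u - v⟫ := by
    intro u v
    have hinner : ⟪A u - A v, u - v⟫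
        = ∑ n : ZMod N, ⟪A u n - A v n, u n - v n⟫ := by
      rw [PiLp.inner_apply]
      exact Finset.sum_congr rfl fun n _ => by rw [hsubapp, hsubapp]
    have hterm : ∀ n : ZMod N, ⟪A u n - A v n, u n - v n⟫
        = (1 / τ) * ⟪B ((u - v) n - (u - v) (n - 1)), (u - v) n⟫
          + ⟪K (u n) - K (v n), u n - v n⟫ := by
      intro n
      have hB : A u n - A v n
          = (1 / τ) • B ((u - v) n - (u - v) (n - 1)) + (K (u n) - K (v n)) := by
        simp only [A, WithLp.ofLp_toLp, hsubapp, map_sub, smul_sub]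
        abel
      rw [hB, inner_add_left, real_inner_smul_left, hsubapp]
    rw [hinner]
    have h1 : 0 ≤ ∑ n : ZMod N, ⟪B ((u - v) n - (u - v) (n - 1)), (u - v) n⟫ :=
      sumB_aux B hBsymm hBnonneg (fun n => (u - v) n)
    have h2 : γ * ‖u - v‖ ^ 2 ≤ ∑ n : ZMod N, ⟪K (u n) - K (v n), u n - v n⟫ := by
      rw [hnormsq, Finset.mul_sum]
      exact Finset.sum_le_sum fun n _ => by
        have := hKmono (u n) (v n); simpa [hsubapp] using this
    calc γ * ‖u - v‖ ^ 2
        ≤ (1 / τ) * ∑ n : ZMod N, ⟪B ((u - v) n - (u - v) (n - 1)), (u - v) n⟫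
          + ∑ n : ZMod N, ⟪K (u n) - K (v n), u n - v n⟫ := by
          have : 0 ≤ (1 / τ) * ∑ n : ZMod N,
              ⟪B ((u - v) n - (u - v) (n - 1)), (u - v) n⟫ := by positivity
          linarith
      _ = ∑ n : ZMod N, ⟪A u n - A v n, u n - v n⟫ := by
          rw [Finset.mul_sum, ← Finset.sum_add_distrib]
          exact Finset.sum_congr rfl fun n _ => (hterm n).symm
  -- Lipschitz continuity of A on E.
  have hcomp_bound : ∀ (x w : E) (c : ℝ), 0 ≤ c → (∀ n, ‖x n‖ ≤ c * ‖w n‖) →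
      ‖x‖ ≤ c * ‖w‖ := by
    intro x w c hc h
    refine sq_le_aux (norm_nonneg _) (by positivity) ?_
    rw [hnormsq x, mul_pow, hnormsq w, Finset.mul_sum]
    exact Finset.sum_le_sum fun n _ => by
      have := h n
      nlinarith [norm_nonneg (x n), norm_nonneg (w n)]
  have hlip : ∀ u v : E, ‖A u - A v‖ ≤ M * ‖u - v‖ := by
    intro u v
    set w : E := u - v with hw
    let X : E := WithLp.toLp 2 fun n => (1 / τ) • B (w n)
    let Y : E := WithLp.toLp 2 fun n => -((1 / τ) • B (w (n - 1)))
    let Z : E := WithLp.toLp 2 fun n => K (u n) - K (v n)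
    have hsplit : A u - A v = X + Y + Z := by
      ext n
      show A u n - A v n = X n + Y n + Z n
      simp only [A, X, Y, Z, WithLp.ofLp_toLp, hsubapp, map_sub, smul_sub, hw]
      abel
    have hBn : ∀ a : V, ‖(1 / τ) • B a‖ ≤ (‖B‖ / τ) * ‖a‖ := by
      intro a
      rw [norm_smul]
      have h1 : ‖(1:ℝ) / τ‖ = 1 / τ := by
        rw [Real.norm_eq_abs, abs_of_pos (by positivity)]
      rw [h1]
      calc (1 / τ) * ‖B a‖ ≤ (1 / τ) * (‖B‖ * ‖a‖) := by
            have := B.le_opNorm a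
            have h2 : 0 ≤ 1 / τ := by positivity
            exact mul_le_mul_of_nonneg_left this h2
        _ = (‖B‖ / τ) * ‖a‖ := by ring
    have hX : ‖X‖ ≤ (‖B‖ / τ) * ‖w‖ :=
      hcomp_bound X w (‖B‖ / τ) (by positivity) fun n => hBn (w n)
    have hY : ‖Y‖ ≤ (‖B‖ / τ) * ‖w‖ := by
      refine sq_le_aux (norm_nonneg _) (by positivity) ?_
      rw [hnormsq Y, mul_pow, hnormsq w, Finset.mul_sum]
      have hshift : ∑ n : ZMod N, ‖Y n‖ ^ 2
          = ∑ n : ZMod N, ‖(1 / τ) • B (w n)‖ ^ 2 := by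
        refine Fintype.sum_equiv (Equiv.subRight (1 : ZMod N))
          (fun n => ‖Y n‖ ^ 2) (fun n => ‖(1 / τ) • B (w n)‖ ^ 2) (fun n => ?_)
        simp only [Y, WithLp.ofLp_toLp, norm_neg, Equiv.subRight_apply]
      rw [hshift]
      exact Finset.sum_le_sum fun n _ => by
        have := hBn (w n)
        nlinarith [norm_nonneg ((1 / τ) • B (w n)), norm_nonneg (w n),
          mul_nonneg (div_nonneg hBV hτ.le) (norm_nonneg (w n))]
    have hZ : ‖Z‖ ≤ L * ‖w‖ :=
      hcomp_bound Z w L hL fun n => by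
        have := hKlip (u n) (v n); simpa [Z, hsubapp, hw] using this
    calc ‖A u - A v‖ = ‖X + Y + Z‖ := by rw [hsplit]
      _ ≤ ‖X‖ + ‖Y‖ + ‖Z‖ := norm_add₃_le
      _ ≤ (‖B‖ / τ) * ‖w‖ + (‖B‖ / τ) * ‖w‖ + L * ‖w‖ := by linarith
      _ ≤ M * ‖w‖ := by
          have h0 : 0 ≤ ‖w‖ := norm_nonneg _
          have : (‖B‖ / τ) * ‖w‖ + (‖B‖ / τ) * ‖w‖ + L * ‖w‖
              = (2 * ‖B‖ / τ + L) * ‖w‖ := by ring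
          rw [this]
          have hγw : 0 ≤ γ * ‖w‖ := by positivity
          nlinarith
  -- Zarantonello iteration: T is a contraction.
  set ρ : ℝ := γ / M ^ 2 with hρdef
  have hρ0 : 0 < ρ := by positivity
  let T : E → E := fun u => u - ρ • (A u - fE)
  have hTsq : ∀ u v : E, ‖T u - T v‖ ^ 2 ≤ (1 - γ ^ 2 / M ^ 2) * ‖u - v‖ ^ 2 := by
    intro u v
    have hTsub : T u - T v = (u - v) - ρ • (A u - A v) := by
      simp only [T, smul_sub]
      abel
    rw [hTsub, norm_sub_sq_real]
    have hinn : ⟪u - v, ρ • (A u - A v)⟫ = ρ * ⟪A u - A v, u - v⟫ := by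
      rw [real_inner_smul_right, real_inner_comm]
    have hnr : ‖ρ • (A u - A v)‖ ^ 2 = ρ ^ 2 * ‖A u - A v‖ ^ 2 := by
      rw [norm_smul, Real.norm_eq_abs, abs_of_pos hρ0, mul_pow]
    rw [hinn, hnr]
    have hm := hmono u v
    have hl := hlip u v
    have hMw : 0 ≤ M * ‖u - v‖ := by positivity
    have hlsq : ‖A u - A v‖ ^ 2 ≤ M ^ 2 * ‖u - v‖ ^ 2 := by
      nlinarith [norm_nonneg (A u - A v)]
    have hρval : ρ * M ^ 2 = γ := by
      rw [hρdef]; field_simp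
    have h1 : ρ * (γ * ‖u - v‖ ^ 2) ≤ ρ * ⟪A u - A v, u - v⟫ :=
      mul_le_mul_of_nonneg_left hm hρ0.le
    have h2 : ρ ^ 2 * ‖A u - A v‖ ^ 2 ≤ ρ ^ 2 * (M ^ 2 * ‖u - v‖ ^ 2) :=
      mul_le_mul_of_nonneg_left hlsq (by positivity)
    have h4 : ρ ^ 2 * (M ^ 2 * ‖u - v‖ ^ 2) = ρ * γ * ‖u - v‖ ^ 2 := by
      rw [← hρval]; ring
    have h3 : γ ^ 2 / M ^ 2 = ρ * γ := by
      rw [hρdef]; ring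
    rw [h3]
    nlinarith [h1, h2, h4]
  set k : ℝ := Real.sqrt (1 - γ ^ 2 / M ^ 2) with hkdef
  have hk0 : 0 ≤ k := Real.sqrt_nonneg _
  have hfac0 : 0 ≤ 1 - γ ^ 2 / M ^ 2 := by
    have : γ ^ 2 ≤ M ^ 2 := by nlinarith
    have h2 : γ ^ 2 / M ^ 2 ≤ 1 := by
      rw [div_le_one (by positivity)]; exact this
    linarith
  have hk2 : k ^ 2 = 1 - γ ^ 2 / M ^ 2 := Real.sq_sqrt hfac0
  have hk1 : k < 1 := by
    have hpos : 0 < γ ^ 2 / M ^ 2 := by positivity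
    nlinarith
  have hTlip : ∀ u v : E, dist (T u) (T v) ≤ k * dist u v := by
    intro u v
    rw [dist_eq_norm, dist_eq_norm]
    refine sq_le_aux (norm_nonneg _) (by positivity) ?_
    rw [mul_pow, hk2]
    exact hTsq u v
  have hNE : Nonempty E := ⟨0⟩
  have hcontr : ContractingWith ⟨k, hk0⟩ T := by
    constructor
    · exact_mod_cast hk1
    · exact LipschitzWith.of_dist_le_mul fun u v => hTlip u v
  -- Characterize solutions as fixed points of T.
  have hiff : ∀ u : E, (∀ n : ZMod N,
      (1 / τ) • B (u n - u (n - 1)) + K (u n) = f n) ↔ T u = u := by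
    intro u
    constructor
    · intro h
      have hAu : A u = fE := congrArg (WithLp.toLp 2) (funext fun n => h n)
      simp only [T, hAu, sub_self, smul_zero, sub_zero]
    · intro h
      have h1 : ρ • (A u - fE) = 0 := by
        have := sub_eq_self.mp h
        exact this
      have h2 : A u - fE = 0 := by
        rcases smul_eq_zero.mp h1 with h | h
        · exact absurd h (ne_of_gt hρ0)
        · exact h
      have h3 : A u = fE := sub_eq_zero.mp h2
      intro n
      exact congrFun (congrArg WithLp.ofLp h3) n
  have main : ∃! u : E, ∀ n : ZMod N,
      (1 / τ) • B (u n - u (n - 1)) + K (u n) = f n := by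
    refine ⟨ContractingWith.fixedPoint T hcontr, ?_, ?_⟩
    · exact (hiff _).mpr (ContractingWith.fixedPoint_isFixedPt hcontr)
    · intro v hv
      exact ContractingWith.fixedPoint_unique hcontr ((hiff v).mp hv)
  obtain ⟨u, hu, huniq⟩ := main
  exact ⟨u.ofLp, hu, fun v hv => congrArg WithLp.ofLp (huniq (WithLp.toLp 2 v) hv)⟩
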